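/- The classifier Γ₀^B based on the observed covariate fragments is optimal: for every classifier of the form Γ₀(χ^(δ)) = Σ_{k=1}^M 1{δ=k}·g_k(χ|_{s_k}) with Borel-measurable g_k: L²(s_k) → {0,1}, one has ℙ{Γ₀^B(χ^(δ)) ≠ Y} ≤ ℙ{Γ₀(χ^(δ)) ≠ Y}. -/

import Mathlib

open MeasureTheory ProbabilityTheory Filter

noncomputable section

noncomputable instance (μ : Measure ℝ) : MeasurableSpace (Lp ℝ 2 μ) := borel _
instance (μ : Measure ℝ) : BorelSpace (Lp ℝ 2 μ) := ⟨rfl⟩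

/-- Bounded a.e.-strongly-measurable functions are integrable w.r.t. a finite measure. -/
private lemma integrable_of_abs_le {Ω : Type} [MeasurableSpace Ω] {P : Measure Ω}
    [IsFiniteMeasure P] {f : Ω → ℝ} (hf : AEStronglyMeasurable f P) (C : ℝ)
    (hb : ∀ ω, |f ω| ≤ C) : Integrable f P :=
  Integrable.mono' (integrable_const C) hf (Eventually.of_forall fun ω => hb ω)

/-- Key conditional expectation identity: for `h` measurable w.r.t. `m` and bounded,
`∫ h·f = ∫ h·E[f|m]`. -/
private lemma integral_mul_condexp_key {Ω : Type} [mΩ : MeasurableSpace Ω] (P : Measure Ω)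
    [IsProbabilityMeasure P] {m : MeasurableSpace Ω} (hm : m ≤ mΩ)
    {h f : Ω → ℝ} (hh : StronglyMeasurable[m] h) (hhb : ∀ ω, |h ω| ≤ 1)
    (hf : Integrable f P) :
    ∫ ω, h ω * f ω ∂P = ∫ ω, h ω * (P[f|m]) ω ∂P := by
  haveI : SigmaFinite (P.trim hm) := by
    haveI : IsFiniteMeasure (P.trim hm) := isFiniteMeasure_trim hm
    infer_instance
  have hhm : @AEStronglyMeasurable Ω ℝ _ mΩ mΩ h P := (hh.mono hm).aestronglyMeasurable
  have hhf : Integrable (fun ω => h ω * f ω) P := by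
    refine Integrable.mono' hf.abs (hhm.mul hf.1) (Eventually.of_forall fun ω => ?_)
    have : ‖h ω * f ω‖ = |h ω| * |f ω| := abs_mul _ _
    rw [this]
    calc |h ω| * |f ω| ≤ 1 * |f ω| := by
          exact mul_le_mul_of_nonneg_right (hhb ω) (abs_nonneg _)
      _ = |f ω| := one_mul _
  have hmul : P[(fun ω => h ω * f ω)|m] =ᵐ[P] fun ω => h ω * (P[f|m]) ω :=
    condExp_mul_of_stronglyMeasurable_left hh hhf hf
  calc ∫ ω, h ω * f ω ∂P = ∫ ω, (P[(fun ω => h ω * f ω)|m]) ω ∂P :=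
        (integral_condExp hm).symm
    _ = ∫ ω, h ω * (P[f|m]) ω ∂P := integral_congr_ae hmul

/-- Risk formula: for `{0,1}`-valued `F`, `Y`,
`P{F ≠ Y} = ∫ Y − ∫ F·(2Y−1)`. -/
private lemma risk_formula {Ω : Type} [MeasurableSpace Ω] (P : Measure Ω)
    [IsProbabilityMeasure P] {F Y : Ω → ℝ} (hF : Measurable F) (hY : Measurable Y)
    (hF01 : ∀ ω, F ω = 0 ∨ F ω = 1) (hY01 : ∀ ω, Y ω = 0 ∨ Y ω = 1) :
    (P {ω | F ω ≠ Y ω}).toReal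
      = (∫ ω, Y ω ∂P) - ∫ ω, F ω * (2 * Y ω - 1) ∂P := by
  have hA : MeasurableSet {ω | F ω ≠ Y ω} :=
    (measurableSet_eq_fun hF hY).compl
  have hind : ∀ ω, ({ω | F ω ≠ Y ω}).indicator (fun _ => (1:ℝ)) ω
      = Y ω - F ω * (2 * Y ω - 1) := by
    intro ω
    rcases hF01 ω with h1 | h1 <;> rcases hY01 ω with h2 | h2 <;>
      simp [Set.indicator_apply, Set.mem_setOf_eq, h1, h2] <;> norm_num
  have hYint : Integrable Y P :=
    integrable_of_abs_le hY.aestronglyMeasurable 1 (fun ω => by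
      rcases hY01 ω with h | h <;> simp [h])
  have hFint : Integrable (fun ω => F ω * (2 * Y ω - 1)) P := by
    refine integrable_of_abs_le ?_ 1 (fun ω => ?_)
    · exact (hF.mul ((hY.const_mul 2).sub measurable_const)).aestronglyMeasurable
    · rcases hF01 ω with h1 | h1 <;> rcases hY01 ω with h2 | h2 <;>
        simp [h1, h2] <;> norm_num
  calc (P {ω | F ω ≠ Y ω}).toReal
      = ∫ ω, ({ω | F ω ≠ Y ω}).indicator (fun _ => (1:ℝ)) ω ∂P :=
        (integral_indicator_one hA).symm
    _ = ∫ ω, (Y ω - F ω * (2 * Y ω - 1)) ∂P := by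
        exact integral_congr_ae (Eventually.of_forall hind)
    _ = (∫ ω, Y ω ∂P) - ∫ ω, F ω * (2 * Y ω - 1) ∂P := integral_sub hYint hFint

theorem functional_bayes_classifier_optimal
    {Ω : Type} [MeasurableSpace Ω] (P : Measure Ω) [IsProbabilityMeasure P]
    (M : ℕ) (hM : 1 ≤ M)
    (Y : Ω → ℝ) (hYmeas : Measurable Y) (hY01 : ∀ ω, Y ω = 0 ∨ Y ω = 1)
    (δ : Ω → Fin M) (hδ : Measurable δ)
    -- the compact interval 𝓘 and the observation patterns s k ⊆ 𝓘, with s 0 = 𝓘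
    (a b : ℝ) (hab : a ≤ b) (𝓘 : Set ℝ) (h𝓘 : 𝓘 = Set.Icc a b)
    (s : Fin M → Set ℝ) (hsmeas : ∀ k, MeasurableSet (s k))
    (hs𝓘 : ∀ k, s k ⊆ 𝓘) (hs0 : ∀ h0 : 0 < M, s ⟨0, h0⟩ = 𝓘)
    -- the random curve χ ∈ L²(𝓘)
    (χ : Ω → Lp ℝ 2 (volume.restrict 𝓘)) (hχ : Measurable χ)
    -- the observed fragments χ|_{s k} ∈ L²(s k)
    (χres : (k : Fin M) → Ω → Lp ℝ 2 (volume.restrict (s k)))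
    (hχres : ∀ k, Measurable (χres k))
    (hχresAE : ∀ k ω, (χres k ω : ℝ → ℝ) =ᵐ[volume.restrict (s k)] (χ ω : ℝ → ℝ))
    -- φ0 k is a version of the conditional expectation 𝔼[(2Y−1)·1{δ=k} | σ(χ|_{s_k})]
    (φ0 : Fin M → Ω → ℝ)
    (hφ0 : ∀ k, φ0 k =
      P[(fun ω => (2 * Y ω - 1) * (if δ ω = k then (1:ℝ) else 0)) |
        MeasurableSpace.comap (χres k) inferInstance])
    -- a competing classifier built from Borel-measurable {0,1}-valued g_k on L²(s_k)
    (g : (k : Fin M) → Lp ℝ 2 (volume.restrict (s k)) → ℝ)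
    (hg : ∀ k, Measurable (g k)) (hg01 : ∀ k u, g k u = 0 ∨ g k u = 1) :
    P {ω | (∑ k, (if δ ω = k then (1:ℝ) else 0) * (if 0 < φ0 k ω then (1:ℝ) else 0)) ≠ Y ω}
      ≤ P {ω | (∑ k, (if δ ω = k then (1:ℝ) else 0) * g k (χres k ω)) ≠ Y ω} := by
  classical
  set m : Fin M → MeasurableSpace Ω :=
    fun k => MeasurableSpace.comap (χres k) inferInstance with hm_def
  have hm : ∀ k, m k ≤ ‹MeasurableSpace Ω› := fun k =>
    measurable_iff_comap_le.mp (hχres k)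
  -- measurability of φ0
  have hφ0sm : ∀ k, StronglyMeasurable[m k] (φ0 k) := by
    intro k; rw [hφ0 k]; exact stronglyMeasurable_condExp
  have hφ0meas : ∀ k, Measurable (φ0 k) := fun k =>
    ((hφ0sm k).mono (hm k)).measurable
  -- the two pattern-wise classifiers
  set cB : Fin M → Ω → ℝ := fun k ω => if 0 < φ0 k ω then (1:ℝ) else 0 with hcB_def
  set cG : Fin M → Ω → ℝ := fun k ω => g k (χres k ω) with hcG_def
  have hcB01 : ∀ k ω, cB k ω = 0 ∨ cB k ω = 1 := by
    intro k ω; by_cases h : 0 < φ0 k ω <;> simp [hcB_def, h]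
  have hcG01 : ∀ k ω, cG k ω = 0 ∨ cG k ω = 1 := fun k ω => hg01 k (χres k ω)
  have hcBsm : ∀ k, StronglyMeasurable[m k] (cB k) := by
    intro k
    have hset : MeasurableSet[m k] {ω | 0 < φ0 k ω} :=
      (hφ0sm k).measurable measurableSet_Ioi
    exact (Measurable.ite hset measurable_const measurable_const).stronglyMeasurable
  have hcGsm : ∀ k, StronglyMeasurable[m k] (cG k) := by
    intro k
    have hχm : Measurable[m k] (χres k) := measurable_iff_comap_le.mpr le_rfl
    exact ((hg k).comp hχm).stronglyMeasurable
  have hcBmeas : ∀ k, Measurable (cB k) := fun k => ((hcBsm k).mono (hm k)).measurable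
  have hcGmeas : ∀ k, Measurable (cG k) := fun k => ((hcGsm k).mono (hm k)).measurable
  -- sums collapse
  have hsum : ∀ (c : Fin M → Ω → ℝ) ω,
      (∑ k, (if δ ω = k then (1:ℝ) else 0) * c k ω) = c (δ ω) ω := by
    intro c ω
    rw [Finset.sum_eq_single (δ ω)]
    · simp
    · intro k _ hk; simp [Ne.symm hk]
    · intro h; exact absurd (Finset.mem_univ _) h
  -- the summed classifiers
  set FB : Ω → ℝ := fun ω => ∑ k, (if δ ω = k then (1:ℝ) else 0) * cB k ω with hFB_def
  set FG : Ω → ℝ := fun ω => ∑ k, (if δ ω = k then (1:ℝ) else 0) * cG k ω with hFG_def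
  have hFmeas : ∀ (c : Fin M → Ω → ℝ), (∀ k, Measurable (c k)) →
      Measurable (fun ω => ∑ k, (if δ ω = k then (1:ℝ) else 0) * c k ω) := by
    intro c hc
    refine Finset.measurable_sum _ (fun k _ => Measurable.mul ?_ (hc k))
    exact Measurable.ite (hδ (measurableSet_singleton k)) measurable_const measurable_const
  have hFBmeas : Measurable FB := hFmeas _ hcBmeas
  have hFGmeas : Measurable FG := hFmeas _ hcGmeas
  have hFB01 : ∀ ω, FB ω = 0 ∨ FB ω = 1 := by
    intro ω; rw [hFB_def]; simp only [hsum]; exact hcB01 _ ω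
  have hFG01 : ∀ ω, FG ω = 0 ∨ FG ω = 1 := by
    intro ω; rw [hFG_def]; simp only [hsum]; exact hcG01 _ ω
  -- the key integral identity for each pattern
  have hf_int : ∀ k : Fin M,
      Integrable (fun ω => (2 * Y ω - 1) * (if δ ω = k then (1:ℝ) else 0)) P := by
    intro k
    refine integrable_of_abs_le ?_ 1 (fun ω => ?_)
    · exact (((hYmeas.const_mul 2).sub measurable_const).mul
        (Measurable.ite (hδ (measurableSet_singleton k)) measurable_const
          measurable_const)).aestronglyMeasurable
    · rcases hY01 ω with h | h <;> by_cases hk : δ ω = k <;> simp [h, hk] <;> norm_num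
  have key : ∀ (c : Fin M → Ω → ℝ), (∀ k, StronglyMeasurable[m k] (c k)) →
      (∀ k ω, c k ω = 0 ∨ c k ω = 1) →
      ∫ ω, (∑ k, (if δ ω = k then (1:ℝ) else 0) * c k ω) * (2 * Y ω - 1) ∂P
        = ∑ k, ∫ ω, c k ω * φ0 k ω ∂P := by
    intro c hcsm hc01
    have hb : ∀ k ω, |c k ω| ≤ 1 := by
      intro k ω; rcases hc01 k ω with h | h <;> simp [h]
    have hterm_int : ∀ k : Fin M, Integrable
        (fun ω => c k ω * ((2 * Y ω - 1) * (if δ ω = k then (1:ℝ) else 0))) P := by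
      intro k
      refine Integrable.mono' (hf_int k).abs
        (((hcsm k).mono (hm k)).aestronglyMeasurable.mul (hf_int k).1)
        (Eventually.of_forall fun ω => ?_)
      rw [Real.norm_eq_abs, abs_mul]
      calc |c k ω| * |(2 * Y ω - 1) * (if δ ω = k then (1:ℝ) else 0)|
          ≤ 1 * |(2 * Y ω - 1) * (if δ ω = k then (1:ℝ) else 0)| :=
            mul_le_mul_of_nonneg_right (hb k ω) (abs_nonneg _)
        _ = _ := one_mul _
    calc ∫ ω, (∑ k, (if δ ω = k then (1:ℝ) else 0) * c k ω) * (2 * Y ω - 1) ∂P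
        = ∫ ω, ∑ k, c k ω * ((2 * Y ω - 1) * (if δ ω = k then (1:ℝ) else 0)) ∂P := by
          refine integral_congr_ae (Eventually.of_forall fun ω => ?_)
          dsimp only
          rw [Finset.sum_mul]
          refine Finset.sum_congr rfl (fun k _ => by ring)
      _ = ∑ k, ∫ ω, c k ω * ((2 * Y ω - 1) * (if δ ω = k then (1:ℝ) else 0)) ∂P :=
          integral_finset_sum _ (fun k _ => hterm_int k)
      _ = ∑ k, ∫ ω, c k ω * φ0 k ω ∂P := by
          refine Finset.sum_congr rfl (fun k _ => ?_)
          rw [integral_mul_condexp_key P (hm k) (hcsm k) (hb k) (hf_int k)]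
          rw [hφ0 k]
  -- comparison of the per-pattern integrals
  have hcomp : ∑ k, ∫ ω, cG k ω * φ0 k ω ∂P ≤ ∑ k, ∫ ω, cB k ω * φ0 k ω ∂P := by
    refine Finset.sum_le_sum (fun k _ => ?_)
    have hint : ∀ (c : Fin M → Ω → ℝ), Measurable (c k) → (∀ ω, c k ω = 0 ∨ c k ω = 1) →
        Integrable (fun ω => c k ω * φ0 k ω) P := by
      intro c hcm hc01
      have hφint : Integrable (φ0 k) P := by rw [hφ0 k]; exact integrable_condExp
      refine Integrable.mono' hφint.abs
        (hcm.aestronglyMeasurable.mul hφint.1) (Eventually.of_forall fun ω => ?_)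
      rw [Real.norm_eq_abs, abs_mul]
      rcases hc01 ω with h | h <;> simp [h]
    refine integral_mono (hint cG (hcGmeas k) (fun ω => hcG01 k ω))
      (hint cB (hcBmeas k) (fun ω => hcB01 k ω)) (fun ω => ?_)
    by_cases hpos : 0 < φ0 k ω
    · have : cB k ω = 1 := by simp [hcB_def, hpos]
      rw [this, one_mul]
      rcases hcG01 k ω with h | h <;> rw [h] <;> simp [le_of_lt hpos]
    · have : cB k ω = 0 := by simp [hcB_def, hpos]
      rw [this, zero_mul]
      push_neg at hpos
      rcases hcG01 k ω with h | h <;> rw [h] <;> simp [hpos]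
  -- conclude via the risk formula
  have hineq : (P {ω | FB ω ≠ Y ω}).toReal ≤ (P {ω | FG ω ≠ Y ω}).toReal := by
    rw [risk_formula P hFBmeas hYmeas hFB01 hY01,
        risk_formula P hFGmeas hYmeas hFG01 hY01]
    have hB := key cB hcBsm hcB01
    have hG := key cG hcGsm hcG01
    simp only [hFB_def, hFG_def, hB, hG]
    linarith
  exact (ENNReal.toReal_le_toReal (measure_ne_top P _) (measure_ne_top P _)).mp hineq

end
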